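/- Let f₁, f₂, f₃, f₄, g₁, g₂, g₄ ∈ ℂ and set g₃ := −f₃f₄. Put f = ((f₁, f₂), (f₃, f₄)), g = ((g₁, g₂), (g₃, g₄)), f^♯ = J₂ fᵗ J₂, and define the 2×2 matrix d := I₂ + E₄·conj(f^♯)ᵗ·f^♯ + E₄·conj(g)ᵗ·E₁·g. Then d = (((1+|f₃|²)(1+|f₄|²), conj(f₃)f₁ + conj(f₄)f₂ + conj(g₃)g₄), (0, 1)); in particular d is invertible. Moreover, the matrix u^♯ := (f^♯ − conj(f)ᵗ·E₁·g)·d⁻¹ has first column equal to (f₄/(1+|f₄|²), f₃/(1+|f₃|²))ᵗ. -/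

import Mathlib

open Matrix

noncomputable section

/-- `J₂ = ((0,1),(1,0))`. -/
def J2 : Matrix (Fin 2) (Fin 2) ℂ := !![0, 1; 1, 0]
/-- `E₁ = ((0,0),(0,1))`. -/
def E1 : Matrix (Fin 2) (Fin 2) ℂ := !![0, 0; 0, 1]
/-- `E₄ = ((1,0),(0,0))`. -/
def E4 : Matrix (Fin 2) (Fin 2) ℂ := !![1, 0; 0, 0]
/-- Entrywise complex conjugation of a matrix. -/
def conjM {m n : Type*} (M : Matrix m n ℂ) : Matrix m n ℂ := M.map (starRingEnd ℂ)

lemma habs' (z : ℂ) : ((‖z‖ : ℝ) : ℂ) ^ 2 = starRingEnd ℂ z * z := by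
  rw [← Complex.ofReal_pow, ← Complex.normSq_eq_norm_sq, mul_comm, Complex.mul_conj]

lemma trans2 (a b c d : ℂ) : !![a,b;c,d]ᵀ = !![a,c;b,d] := by
  ext i j; fin_cases i <;> fin_cases j <;> simp

lemma conjM2 (a b c d : ℂ) :
    conjM !![a,b;c,d] = !![starRingEnd ℂ a, starRingEnd ℂ b; starRingEnd ℂ c, starRingEnd ℂ d] := by
  ext i j; fin_cases i <;> fin_cases j <;> simp [conjM]

lemma habs (z : ℂ) : ((‖z‖ ^ 2 : ℝ) : ℂ) = starRingEnd ℂ z * z := by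
  rw [← Complex.normSq_eq_norm_sq, mul_comm, Complex.mul_conj]

/-- with `g₃ = −f₃f₄`, the matrix
`d = I₂ + E₄ conj(f^♯)ᵗ f^♯ + E₄ conj(g)ᵗ E₁ g` equals
`(((1+|f₃|²)(1+|f₄|²), conj(f₃)f₁ + conj(f₄)f₂ + conj(g₃)g₄), (0, 1))`, is invertible, and
`u^♯ = (f^♯ − conj(f)ᵗ E₁ g) d⁻¹` has first column `(f₄/(1+|f₄|²), f₃/(1+|f₃|²))ᵗ`. -/
theorem stmt13 (f₁ f₂ f₃ f₄ g₁ g₂ g₄ : ℂ) (g₃ : ℂ) (hg₃ : g₃ = -(f₃ * f₄))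
    (f g fsh d ush : Matrix (Fin 2) (Fin 2) ℂ)
    (hf : f = !![f₁, f₂; f₃, f₄]) (hg : g = !![g₁, g₂; g₃, g₄])
    (hfsh : fsh = J2 * fᵀ * J2)
    (hd : d = 1 + E4 * (conjM fsh)ᵀ * fsh + E4 * (conjM g)ᵀ * E1 * g)
    (hush : ush = (fsh - (conjM f)ᵀ * E1 * g) * d⁻¹) :
    d = !![((((1 + ‖f₃‖ ^ 2) * (1 + ‖f₄‖ ^ 2) : ℝ)) : ℂ),
            starRingEnd ℂ f₃ * f₁ + starRingEnd ℂ f₄ * f₂ + starRingEnd ℂ g₃ * g₄;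
           0, 1] ∧
    IsUnit d ∧
    ush 0 0 = f₄ / (((1 + ‖f₄‖ ^ 2 : ℝ)) : ℂ) ∧
    ush 1 0 = f₃ / (((1 + ‖f₃‖ ^ 2 : ℝ)) : ℂ) := by
  have ha3 : ((1 + ‖f₃‖ ^ 2 : ℝ) : ℂ) ≠ 0 := by
    exact_mod_cast (by positivity : (0:ℝ) < 1 + ‖f₃‖ ^ 2).ne'
  have ha4 : ((1 + ‖f₄‖ ^ 2 : ℝ) : ℂ) ≠ 0 := by
    exact_mod_cast (by positivity : (0:ℝ) < 1 + ‖f₄‖ ^ 2).ne'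
  set a : ℂ := (((1 + ‖f₃‖ ^ 2) * (1 + ‖f₄‖ ^ 2) : ℝ) : ℂ) with ha
  set b : ℂ := starRingEnd ℂ f₃ * f₁ + starRingEnd ℂ f₄ * f₂ + starRingEnd ℂ g₃ * g₄ with hb
  have hasplit : a = ((1 + ‖f₃‖ ^ 2 : ℝ) : ℂ) * ((1 + ‖f₄‖ ^ 2 : ℝ) : ℂ) := by
    push_cast [ha]; ring
  have haa : a ≠ 0 := hasplit ▸ mul_ne_zero ha3 ha4
  have hfsh' : fsh = !![f₄, f₂; f₃, f₁] := by
    rw [hfsh, hf, trans2]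
    ext i j
    fin_cases i <;> fin_cases j <;>
      simp [J2, trans2, Matrix.mul_apply, Fin.sum_univ_two]
  have hdval : d = !![a, b; 0, 1] := by
    rw [hd, hfsh', hg]
    simp only [conjM2, trans2]
    ext i j
    fin_cases i <;> fin_cases j <;>
      simp [E4, E1, conjM2, trans2, Matrix.mul_apply, Fin.sum_univ_two, Matrix.one_apply, hasplit, habs, habs',
        hb, hg₃, _root_.map_mul] <;> ring
  refine ⟨hdval, ?_, ?_, ?_⟩
  · rw [hdval]
    rw [Matrix.isUnit_iff_isUnit_det, Matrix.det_fin_two_of]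
    simpa using haa
  all_goals {
    have hdinv : d⁻¹ = !![a⁻¹, -b * a⁻¹; 0, 1] := by
      apply Matrix.inv_eq_right_inv
      rw [hdval]
      ext i j
      fin_cases i <;> fin_cases j <;>
        simp [Matrix.mul_apply, Fin.sum_univ_two, Matrix.one_apply, mul_inv_cancel₀ haa] <;>
        field_simp <;> ring
    rw [hush, hdinv, hfsh', hf, hg]
    simp only [conjM2, trans2]
    simp [E1, Matrix.mul_apply, Fin.sum_univ_two, hg₃, _root_.map_mul]
    have hc3 : ((1 + ‖f₃‖ ^ 2 : ℝ) : ℂ) = 1 + starRingEnd ℂ f₃ * f₃ := by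
      push_cast; rw [habs']
    have hc4 : ((1 + ‖f₄‖ ^ 2 : ℝ) : ℂ) = 1 + starRingEnd ℂ f₄ * f₄ := by
      push_cast; rw [habs']
    have h3 : (1 : ℂ) + starRingEnd ℂ f₃ * f₃ ≠ 0 := hc3 ▸ ha3
    have h4 : (1 : ℂ) + starRingEnd ℂ f₄ * f₄ ≠ 0 := hc4 ▸ ha4
    rw [hasplit, hc3, hc4]
    push_cast [habs']
    field_simp
  }
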